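/- arXiv:1403.7272 — 5 statements merged into one kernel-verified Lean document; each statement's English description precedes it below -/
import Mathlib

section
/- (Hakimi's orientation theorem) Let H=(V,F) be a finite undirected graph and let m(v) be a non-negative integer for every v ∈ V. Then H has an orientation such that the in-degree ρ(v) equals m(v) for all v ∈ V if and only if both: (i) |F| = Σ_{v∈V} m(v), and (ii) |F(X)| ≤ Σ_{v∈X} m(v) for all X ⊆ V, where F(X) denotes the set of edges in F joining two vertices of X. -/
/-!
Common set-up: a finite simple undirected graph on vertex type `V` is given by a
finset `F` of undirected edges (`Sym2 V`), all non-loops.  An orientation is a map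
`o : Sym2 V → V × V` with `Sym2.mk (o e) = e` for every `e ∈ F`.
-/

variable {V : Type*}

/-- The set of vertices incident to at least one edge of `F'`. -/
def edgeSupp [Fintype V] [DecidableEq V] (F' : Finset (Sym2 V)) : Finset V :=
  Finset.univ.filter (fun v => ∃ e ∈ F', v ∈ e)

/-- `(k,ℓ)`-sparsity: every edge subset `F'` satisfies `|F'| ≤ max (k|V(F')| - ℓ) 0`. -/
def Sparse [Fintype V] [DecidableEq V] (k l : ℤ) (F : Finset (Sym2 V)) : Prop :=
  ∀ F' ⊆ F, (F'.card : ℤ) ≤ max (k * (edgeSupp F').card - l) 0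

/-- `(k,ℓ)`-tightness: `(k,ℓ)`-sparse and `|F| = max (k|V| - ℓ) 0`. -/
def Tight [Fintype V] [DecidableEq V] (k l : ℤ) (F : Finset (Sym2 V)) : Prop :=
  Sparse k l F ∧ (F.card : ℤ) = max (k * (Fintype.card V) - l) 0

/-- In-degree of `v` under the orientation `o` of the edge set `F`. -/
def inDeg [DecidableEq V] (F : Finset (Sym2 V)) (o : Sym2 V → V × V) (v : V) : ℕ :=
  (F.filter (fun e => (o e).2 = v)).card

/-- `F(X)`: the edges of `F` joining two vertices of `X`. -/
def edgesWithin [Fintype V] [DecidableEq V] (F : Finset (Sym2 V)) (X : Finset V) :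
    Finset (Sym2 V) :=
  F.filter (fun e => ∀ v : V, v ∈ e → v ∈ X)

/-- The (undirected) edges of `F` whose directed version under `o` enters `X`
from `V \ X`, i.e. those `e ∈ F` with `(o e).1 ∉ X` and `(o e).2 ∈ X`. -/
def entering [DecidableEq V] (F : Finset (Sym2 V)) (o : Sym2 V → V × V) (X : Finset V) :
    Finset (Sym2 V) :=
  F.filter (fun e => (o e).1 ∉ X ∧ (o e).2 ∈ X)
open Finset in
/-- Key selection lemma: for any edge `s(a,b)` of a graph satisfying condition (ii),
one of its endpoints `v` (with the other endpoint `w`) has `m v ≥ 1` and lies in no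
tight set avoiding `w`. -/
lemma hakimi_exists_good_head {V : Type*} [Fintype V] [DecidableEq V]
    (F : Finset (Sym2 V)) (hS : ∀ e ∈ F, ¬ e.IsDiag) (m : V → ℕ)
    (hii : ∀ X : Finset V, (edgesWithin F X).card ≤ ∑ v ∈ X, m v)
    {a b : V} (hab : a ≠ b) (he : s(a,b) ∈ F) :
    ∃ v w : V, s(v,w) = s(a,b) ∧ 1 ≤ m v ∧
      ∀ X : Finset V, v ∈ X → w ∉ X → (edgesWithin F X).card + 1 ≤ ∑ x ∈ X, m x := by
  -- "Blocked v w" : there is a tight set containing v and avoiding w.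
  have key : ¬ ((∃ X : Finset V, a ∈ X ∧ b ∉ X ∧ ∑ x ∈ X, m x ≤ (edgesWithin F X).card) ∧
      (∃ X : Finset V, b ∈ X ∧ a ∉ X ∧ ∑ x ∈ X, m x ≤ (edgesWithin F X).card)) := by
    rintro ⟨⟨Xa, haX, hbX, hta⟩, ⟨Xb, hbY, haY, htb⟩⟩
    have hsub1 : (edgesWithin F Xa) ∪ (edgesWithin F Xb) ⊆ edgesWithin F (Xa ∪ Xb) := by
      intro e he'
      simp only [edgesWithin, mem_union, mem_filter] at he' ⊢
      rcases he' with ⟨h1, h2⟩ | ⟨h1, h2⟩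
      · exact ⟨h1, fun v hv => Or.inl (h2 v hv)⟩
      · exact ⟨h1, fun v hv => Or.inr (h2 v hv)⟩
    have hsub2 : (edgesWithin F Xa) ∩ (edgesWithin F Xb) ⊆ edgesWithin F (Xa ∩ Xb) := by
      intro e he'
      simp only [edgesWithin, mem_inter, mem_filter] at he' ⊢
      exact ⟨he'.1.1, fun v hv => ⟨he'.1.2 v hv, he'.2.2 v hv⟩⟩
    have hemem : s(a,b) ∈ edgesWithin F (Xa ∪ Xb) := by
      simp only [edgesWithin, mem_filter]
      refine ⟨he, fun v hv => ?_⟩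
      rw [Sym2.mem_iff] at hv
      rcases hv with rfl | rfl
      · exact mem_union.mpr (Or.inl haX)
      · exact mem_union.mpr (Or.inr hbY)
    have henot : s(a,b) ∉ (edgesWithin F Xa) ∪ (edgesWithin F Xb) := by
      simp only [mem_union, edgesWithin, mem_filter, not_or]
      constructor
      · rintro ⟨-, h⟩; exact hbX (h b (Sym2.mem_mk_right a b))
      · rintro ⟨-, h⟩; exact haY (h a (Sym2.mem_mk_left a b))
    have h5 : ((edgesWithin F Xa) ∪ (edgesWithin F Xb)).card + 1 ≤ (edgesWithin F (Xa ∪ Xb)).card := by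
      have : insert (s(a,b)) ((edgesWithin F Xa) ∪ (edgesWithin F Xb)) ⊆ edgesWithin F (Xa ∪ Xb) :=
        insert_subset hemem hsub1
      have := card_le_card this
      rwa [card_insert_of_notMem henot] at this
    have h6 : (edgesWithin F (Xa ∪ Xb)).card ≤ ∑ x ∈ Xa ∪ Xb, m x := hii _
    have h4 : ((edgesWithin F Xa) ∩ (edgesWithin F Xb)).card ≤ ∑ x ∈ Xa ∩ Xb, m x :=
      le_trans (card_le_card hsub2) (hii _)
    have h1 : ((edgesWithin F Xa) ∪ (edgesWithin F Xb)).card + ((edgesWithin F Xa) ∩ (edgesWithin F Xb)).card = (edgesWithin F Xa).card + (edgesWithin F Xb).card :=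
      card_union_add_card_inter _ _
    have h3 : ∑ x ∈ Xa ∪ Xb, m x + ∑ x ∈ Xa ∩ Xb, m x = ∑ x ∈ Xa, m x + ∑ x ∈ Xb, m x :=
      sum_union_inter
    omega
  -- singleton sets are tight when m v = 0
  have hsingle : ∀ v : V, (edgesWithin F {v}).card = 0 := by
    intro v
    rw [card_eq_zero]
    rw [eq_empty_iff_forall_notMem]
    intro e he'
    simp only [edgesWithin, mem_filter] at he'
    apply hS e he'.1
    induction e using Sym2.ind with
    | _ x y =>
      have hx := he'.2 x (Sym2.mem_mk_left x y)
      have hy := he'.2 y (Sym2.mem_mk_right x y)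
      simp only [mem_singleton] at hx hy
      simp [Sym2.mk_isDiag_iff, hx, hy]
  rw [not_and_or] at key
  rcases key with key | key
  · push_neg at key
    refine ⟨a, b, rfl, ?_, fun X hv hw => key X hv hw⟩
    by_contra hma
    have := key {a} (mem_singleton_self a) (by simpa using hab.symm)
    rw [hsingle a] at this
    simp only [sum_singleton] at this
    omega
  · push_neg at key
    refine ⟨b, a, Sym2.eq_swap, ?_, fun X hv hw => key X hv hw⟩
    by_contra hmb
    have := key {b} (mem_singleton_self b) (by simpa using hab)
    rw [hsingle b] at this
    simp only [sum_singleton] at this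
    omega

open Finset in
lemma hakimi_aux {V : Type*} [Fintype V] [DecidableEq V] :
    ∀ (n : ℕ) (F : Finset (Sym2 V)), F.card = n → (∀ e ∈ F, ¬ e.IsDiag) →
    ∀ m : V → ℕ, F.card = ∑ v : V, m v →
    (∀ X : Finset V, (edgesWithin F X).card ≤ ∑ v ∈ X, m v) →
    ∃ o : Sym2 V → V × V, (∀ e ∈ F, Sym2.mk (o e).1 (o e).2 = e) ∧ ∀ v : V, inDeg F o v = m v := by
  intro n
  induction n with
  | zero =>
    intro F hcard hS m hsum _
    rw [card_eq_zero] at hcard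
    subst hcard
    refine ⟨fun e => e.out, by simp, fun v => ?_⟩
    have hz : ∀ v ∈ Finset.univ, m v = 0 :=
      Finset.sum_eq_zero_iff.mp hsum.symm
    simp [inDeg, hz v (mem_univ v)]
  | succ n ih =>
    intro F hcard hS m hsum hii
    have hne : F.Nonempty := by rw [← card_pos]; omega
    obtain ⟨e, heF⟩ := hne
    obtain ⟨a, b, rfl⟩ : ∃ a b, e = s(a,b) := by
      induction e using Sym2.ind with | _ a b => exact ⟨a, b, rfl⟩
    have hab : a ≠ b := by
      have := hS _ heF
      rwa [Sym2.mk_isDiag_iff] at this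
    obtain ⟨v, w, hvw, hmv, hblk⟩ := hakimi_exists_good_head F hS m hii hab heF
    have heF' : s(v,w) ∈ F := by rw [hvw]; exact heF
    have hvne : v ≠ w := by
      have := hS _ heF'
      rwa [Sym2.mk_isDiag_iff] at this
    set F' := F.erase s(v,w) with hF'
    set m' := Function.update m v (m v - 1) with hm'
    have hcard' : F'.card = n := by rw [hF', card_erase_of_mem heF']; omega
    have hS' : ∀ e ∈ F', ¬ e.IsDiag := fun e he => hS e (mem_of_mem_erase he)
    -- sums of m' over sets containing v and not containing v
    have hsumX : ∀ X : Finset V, v ∈ X → ∑ x ∈ X, m' x + 1 = ∑ x ∈ X, m x := by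
      intro X hv
      rw [hm', Finset.sum_update_of_mem hv]
      have h1 : m v + ∑ x ∈ X \ {v}, m x = ∑ x ∈ X, m x := by
        rw [Finset.sum_eq_sum_sdiff_singleton_add hv m]; omega
      omega
    have hsumX' : ∀ X : Finset V, v ∉ X → ∑ x ∈ X, m' x = ∑ x ∈ X, m x := by
      intro X hv
      refine Finset.sum_congr rfl (fun x hx => ?_)
      rw [hm', Function.update_of_ne (by rintro rfl; exact hv hx)]
    have hsum' : F'.card = ∑ u : V, m' u := by
      have := hsumX Finset.univ (mem_univ v)
      omega
    have hew : ∀ X : Finset V, edgesWithin F' X = (edgesWithin F X).erase s(v,w) := by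
      intro X
      rw [hF', edgesWithin, edgesWithin, Finset.filter_erase]
    have hii' : ∀ X : Finset V, (edgesWithin F' X).card ≤ ∑ x ∈ X, m' x := by
      intro X
      by_cases hv : v ∈ X
      · by_cases hw : w ∈ X
        · have hme : s(v,w) ∈ edgesWithin F X := by
            simp only [edgesWithin, mem_filter]
            refine ⟨heF', fun u hu => ?_⟩
            rw [Sym2.mem_iff] at hu
            rcases hu with rfl | rfl
            · exact hv
            · exact hw
          have h1 : (edgesWithin F' X).card = (edgesWithin F X).card - 1 := by
            rw [hew X, card_erase_of_mem hme]
          have h2 := hsumX X hv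
          have h3 := hii X
          have h4 : 1 ≤ (edgesWithin F X).card := card_pos.mpr ⟨_, hme⟩
          omega
        · have h1 := hblk X hv hw
          have h2 := hsumX X hv
          have h3 : (edgesWithin F' X).card ≤ (edgesWithin F X).card := by
            rw [hew X]; exact card_le_card (erase_subset _ _)
          omega
      · have h1 := hsumX' X hv
        have h2 := hii X
        have h3 : (edgesWithin F' X).card ≤ (edgesWithin F X).card := by
          rw [hew X]; exact card_le_card (erase_subset _ _)
        omega
    obtain ⟨o', ho1, ho2⟩ := ih F' hcard' hS' m' hsum' hii'
    refine ⟨Function.update o' (s(v,w)) (w, v), ?_, ?_⟩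
    · intro e he
      by_cases h : e = s(v,w)
      · subst h
        rw [Function.update_self]
        exact Sym2.eq_swap
      · rw [Function.update_of_ne h]
        exact ho1 e (mem_erase.mpr ⟨h, he⟩)
    · intro u
      have hins : F = insert (s(v,w)) F' := by
        rw [hF', insert_erase heF']
      have hfc : F'.filter (fun e => (Function.update o' (s(v,w)) (w, v) e).2 = u)
          = F'.filter (fun e => (o' e).2 = u) := by
        refine Finset.filter_congr (fun e he => ?_)
        rw [Function.update_of_ne (Finset.ne_of_mem_erase he)]
      have hnm : s(v,w) ∉ F' := notMem_erase _ _
      have hdeg : inDeg F (Function.update o' (s(v,w)) (w, v)) u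
          = inDeg F' o' u + (if v = u then 1 else 0) := by
        rw [inDeg, hins, filter_insert, Function.update_self]
        rw [show ((w, v) : V × V).2 = v from rfl]
        by_cases hvu : v = u
        · rw [if_pos hvu, card_insert_of_notMem (fun h => hnm (mem_of_mem_filter _ h)), hfc]
          rw [inDeg, if_pos hvu]
        · rw [if_neg hvu, hfc]
          simp [inDeg, hvu]
      rw [hdeg, ho2 u]
      by_cases hvu : v = u
      · subst hvu
        rw [if_pos rfl]
        simp only [hm', Function.update_self]
        omega
      · rw [if_neg hvu]
        simp only [hm', Function.update_of_ne (Ne.symm hvu)]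
        omega

open Finset in
/-- **Hakimi's orientation theorem.**  A finite simple graph `H = (V, F)` has an
orientation with in-degree exactly `m v` at every vertex `v` if and only if
`|F| = ∑ v, m v` and `|F(X)| ≤ ∑ v ∈ X, m v` for every `X ⊆ V`. -/
theorem hakimi_orientation {V : Type*} [Fintype V] [DecidableEq V]
    (F : Finset (Sym2 V)) (hSimple : ∀ e ∈ F, ¬ e.IsDiag) (m : V → ℕ) :
    (∃ o : Sym2 V → V × V, (∀ e ∈ F, Sym2.mk (o e).1 (o e).2 = e) ∧ ∀ v : V, inDeg F o v = m v) ↔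
      (F.card = ∑ v : V, m v ∧ ∀ X : Finset V, (edgesWithin F X).card ≤ ∑ v ∈ X, m v) := by
  constructor
  · rintro ⟨o, ho1, ho2⟩
    have hhead : ∀ e ∈ F, (o e).2 ∈ e := by
      intro e he
      have h2 : (o e).2 ∈ Sym2.mk (o e).1 (o e).2 := Sym2.mem_mk_right (o e).1 (o e).2
      rwa [ho1 e he] at h2
    constructor
    · have := Finset.card_eq_sum_card_fiberwise
        (f := fun e => (o e).2) (s := F) (t := Finset.univ) (fun e _ => mem_univ _)
      rw [this]
      exact Finset.sum_congr rfl (fun v _ => ho2 v)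
    · intro X
      have hmem : ∀ e ∈ edgesWithin F X, (o e).2 ∈ X := by
        intro e he
        simp only [edgesWithin, mem_filter] at he
        exact he.2 _ (hhead e he.1)
      rw [Finset.card_eq_sum_card_fiberwise hmem]
      refine Finset.sum_le_sum (fun v hv => ?_)
      rw [← ho2 v]
      exact card_le_card (Finset.filter_subset_filter _ (Finset.filter_subset _ _))
  · rintro ⟨h1, h2⟩
    exact hakimi_aux F.card F rfl hSimple m h1 h2
end

section
/- Let k, ℓ be integers with 0 ≤ ℓ ≤ k, let H=(V,F) be a (k,ℓ)-tight graph with |V| ≥ 2, and let x ∈ V be an arbitrary vertex of H. Then H has an orientation such that the in-degree of x is k−ℓ and the in-degree of every vertex z ∈ V∖{x} is k. -/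
/-!
Common set-up: a finite simple undirected graph on vertex type `V` is given by a
finset `F` of undirected edges (`Sym2 V`), all non-loops.  An orientation is a map
`o : Sym2 V → V × V` with `Sym2.mk (o e).1 (o e).2 = e` for every `e ∈ F`.
-/

variable {V : Type*}

section Aux
set_option linter.unusedSectionVars false
variable [Fintype V] [DecidableEq V]

/-- deficiency measure -/
def Mdef (F : Finset (Sym2 V)) (t : V → ℤ) (o : Sym2 V → V × V) : ℕ :=
  ∑ v, ((inDeg F o v : ℤ) - t v).toNat

lemma card_filter_of_mem {F : Finset (Sym2 V)} {e : Sym2 V} (he : e ∈ F)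
    (P : Sym2 V → Prop) [DecidablePred P] :
    (F.filter P).card = ((F.erase e).filter P).card + if P e then 1 else 0 := by
  conv_lhs => rw [← Finset.insert_erase he]
  rw [Finset.filter_insert]
  split_ifs with h
  · rw [Finset.card_insert_of_notMem (by simp)]
  · simp

lemma inDeg_update {F : Finset (Sym2 V)} {e : Sym2 V} (he : e ∈ F)
    (o : Sym2 V → V × V) (p : V × V) (z : V) :
    (inDeg F (Function.update o e p) z : ℤ)
      = (inDeg F o z : ℤ) + (if p.2 = z then 1 else 0) - (if (o e).2 = z then 1 else 0) := by
  unfold inDeg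
  rw [card_filter_of_mem he, card_filter_of_mem he (P := fun e' => (o e').2 = z)]
  have h1 : (F.erase e).filter (fun e' => ((Function.update o e p) e').2 = z)
       = (F.erase e).filter (fun e' => (o e').2 = z) := by
    apply Finset.filter_congr
    intro e' he'
    rw [Function.update_of_ne (Finset.mem_erase.1 he').1]
  rw [h1, Function.update_self]
  push_cast
  split_ifs <;> ring

lemma sum_inDeg (F : Finset (Sym2 V)) (o : Sym2 V → V × V) :
    ∑ v, inDeg F o v = F.card :=
  (Finset.card_eq_sum_card_fiberwise (fun e _ => Finset.mem_univ ((o e).2))).symm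

lemma sum_inDeg_mem (F : Finset (Sym2 V)) (o : Sym2 V → V × V) (R : Finset V) :
    ∑ v ∈ R, inDeg F o v = (F.filter fun e => (o e).2 ∈ R).card := by
  rw [Finset.card_eq_sum_card_fiberwise (f := fun e => (o e).2) (s := F.filter fun e => (o e).2 ∈ R) (t := R)
      (fun e he => (Finset.mem_filter.1 he).2)]
  apply Finset.sum_congr rfl
  intro v hv
  unfold inDeg
  rw [Finset.filter_filter]
  congr 1
  apply Finset.filter_congr
  intro e _
  constructor
  · intro h; exact ⟨by show (o e).2 ∈ R; rw [h]; exact hv, h⟩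
  · intro h; exact h.2

lemma M_update {F : Finset (Sym2 V)} {t : V → ℤ} {e : Sym2 V} (he : e ∈ F)
    (o : Sym2 V → V × V) (hab : (o e).1 ≠ (o e).2) :
    Mdef F t (Function.update o e (o e).swap)
      + ((inDeg F o (o e).1 : ℤ) - t (o e).1).toNat
      + ((inDeg F o (o e).2 : ℤ) - t (o e).2).toNat
    = Mdef F t o + ((inDeg F o (o e).1 : ℤ) + 1 - t (o e).1).toNat
      + ((inDeg F o (o e).2 : ℤ) - 1 - t (o e).2).toNat := by
  set a := (o e).1 with ha
  set b := (o e).2 with hb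
  have hA : (inDeg F (Function.update o e (o e).swap) a : ℤ) = (inDeg F o a : ℤ) + 1 := by
    rw [inDeg_update he]
    simp [Prod.snd_swap, ← ha, ← hb, hab.symm]
  have hB : (inDeg F (Function.update o e (o e).swap) b : ℤ) = (inDeg F o b : ℤ) - 1 := by
    rw [inDeg_update he]
    simp [Prod.snd_swap, ← ha, ← hb, hab]
  have hC : ∀ z, z ≠ a → z ≠ b →
      (inDeg F (Function.update o e (o e).swap) z : ℤ) = (inDeg F o z : ℤ) := by
    intro z hza hzb
    rw [inDeg_update he]
    simp [Prod.snd_swap, ← ha, ← hb, Ne.symm hza, Ne.symm hzb]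
  have hbmem : b ∈ (Finset.univ : Finset V).erase a := by
    simp [Finset.mem_erase, hab.symm]
  have split : ∀ g : V → ℕ, ∑ v, g v = g a + (g b + ∑ v ∈ ((Finset.univ : Finset V).erase a).erase b, g v) := by
    intro g
    rw [← Finset.add_sum_erase _ g (Finset.mem_univ a), ← Finset.add_sum_erase _ g hbmem]
  unfold Mdef
  rw [split, split]
  have htail : ∑ v ∈ ((Finset.univ : Finset V).erase a).erase b,
        ((inDeg F (Function.update o e (o e).swap) v : ℤ) - t v).toNat
      = ∑ v ∈ ((Finset.univ : Finset V).erase a).erase b, ((inDeg F o v : ℤ) - t v).toNat := by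
    apply Finset.sum_congr rfl
    intro v hv
    rw [hC v (Finset.mem_erase.1 (Finset.mem_of_mem_erase hv)).1 (Finset.mem_erase.1 hv).1]
  rw [htail, hA, hB]
  omega

lemma rtg_to_walk {α : Type*} {r : α → α → Prop} {w u : α} (h : Relation.ReflTransGen r w u) :
    ∃ n : ℕ, ∃ f : ℕ → α, f 0 = w ∧ f n = u ∧ ∀ i < n, r (f i) (f (i+1)) := by
  induction h with
  | refl => exact ⟨0, fun _ => w, rfl, rfl, fun i hi => absurd hi (by omega)⟩
  | @tail b c _ hbc ih =>
    obtain ⟨n, f, h0, hn, hs⟩ := ih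
    refine ⟨n + 1, fun i => if i ≤ n then f i else c, by simp [h0], by simp, ?_⟩
    intro i hi
    rcases lt_or_eq_of_le (Nat.lt_succ_iff.1 hi) with h' | h'
    · have h1 : i ≤ n := by omega
      have h2 : i + 1 ≤ n := by omega
      simpa [h1, h2] using hs i h'
    · have h2 : ¬ (n + 1 ≤ n) := by omega
      simp only [h', if_pos (le_refl n), if_neg h2, hn]
      exact hbc

lemma walk_reverse (F : Finset (Sym2 V)) (hSimple : ∀ e ∈ F, ¬ e.IsDiag) (t : V → ℤ) :
    ∀ n : ℕ, ∀ o : Sym2 V → V × V, (∀ e ∈ F, Sym2.mk (o e).1 (o e).2 = e) →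
    ∀ f : ℕ → V, ((inDeg F o (f 0) : ℤ) < t (f 0)) → (t (f n) < (inDeg F o (f n) : ℤ)) →
    (∀ i < n, ∃ e ∈ F, o e = (f i, f (i+1))) →
    ∃ o', (∀ e ∈ F, Sym2.mk (o' e).1 (o' e).2 = e) ∧ Mdef F t o' < Mdef F t o := by
  intro n
  induction n using Nat.strong_induction_on with
  | _ n IH =>
  intro o ho f hw hu hstep
  rcases Nat.eq_zero_or_pos n with rfl | hnpos
  · exact absurd hu (by omega)
  obtain ⟨m, rfl⟩ : ∃ m, n = m + 1 := ⟨n - 1, by omega⟩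
  by_cases hint : ∃ i, 0 < i ∧ i < m + 1 ∧ (inDeg F o (f i) : ℤ) ≠ t (f i)
  · obtain ⟨i, hi0, hilt, hine⟩ := hint
    rcases lt_or_gt_of_ne hine with hlt | hgt
    · -- deficient interior vertex: use suffix walk
      have hend : f (i + (m + 1 - i)) = f (m + 1) := by congr 1; omega
      refine IH (m + 1 - i) (by omega) o ho (fun j => f (i + j)) (by simpa using hlt) ?_ ?_
      · show t (f (i + (m + 1 - i))) < (inDeg F o (f (i + (m + 1 - i))) : ℤ)
        rw [hend]; exact hu
      · intro j hj
        have h1 := hstep (i + j) (by omega)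
        have harg : i + j + 1 = i + (j + 1) := by omega
        rw [harg] at h1
        exact h1
    · -- excess interior vertex: use prefix walk
      exact IH i (by omega) o ho f hw hgt (fun j hj => hstep j (by omega))
  · push_neg at hint
    obtain ⟨e, he, hoe⟩ := hstep m (by omega)
    have hfm : (o e).1 = f m := by rw [hoe]
    have hfn : (o e).2 = f (m + 1) := by rw [hoe]
    have hab : (o e).1 ≠ (o e).2 := by
      intro hcon
      apply hSimple e he
      rw [← ho e he, Sym2.isDiag_iff_proj_eq]
      exact hcon
    have hfmnefn : f m ≠ f (m + 1) := fun h => hab (by rw [hfm, hfn, h])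
    set o' := Function.update o e (o e).swap with ho'def
    have ho' : ∀ e' ∈ F, Sym2.mk (o' e').1 (o' e').2 = e' := by
      intro e' he'
      by_cases h : e' = e
      · subst h
        rw [ho'def, Function.update_self, Prod.fst_swap, Prod.snd_swap, Sym2.eq_swap]
        exact ho e' he'
      · rw [ho'def, Function.update_of_ne h]
        exact ho e' he'
    have hMkey := M_update (t := t) he o hab
    rw [hfm, hfn, ← ho'def] at hMkey
    rcases Nat.eq_zero_or_pos m with hm0 | hmpos
    · -- single edge walk : reversing it decreases M
      refine ⟨o', ho', ?_⟩
      have hw' : (inDeg F o (f m) : ℤ) < t (f m) := by rw [hm0]; exact hw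
      have hu' : t (f (m + 1)) < (inDeg F o (f (m + 1)) : ℤ) := hu
      omega
    · -- m ≥ 1 : f m is an interior vertex with zero deficiency
      have hzm : (inDeg F o (f m) : ℤ) = t (f m) := hint m hmpos (by omega)
      have hMeq : Mdef F t o' = Mdef F t o := by omega
      have hA : (inDeg F o' (f m) : ℤ) = (inDeg F o (f m) : ℤ) + 1 := by
        rw [ho'def, inDeg_update he]
        simp [Prod.snd_swap, hfm, hfn, Ne.symm hfmnefn]
      have hf0nefm : f 0 ≠ f m := by
        intro h
        rw [h, hzm] at hw
        omega
      have hf0nefn : f 0 ≠ f (m + 1) := by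
        intro h
        rw [h] at hw
        omega
      have hCw : (inDeg F o' (f 0) : ℤ) = (inDeg F o (f 0) : ℤ) := by
        rw [ho'def, inDeg_update he]
        simp [Prod.snd_swap, hfm, hfn, Ne.symm hf0nefm, Ne.symm hf0nefn]
      have hstep' : ∀ i < m, ∃ e' ∈ F, o' e' = (f i, f (i+1)) := by
        intro i hi
        obtain ⟨e', he', hoe'⟩ := hstep i (by omega)
        have hene : e' ≠ e := by
          intro h
          subst h
          have heq : f (i + 1) = f (m + 1) := by rw [← hfn, hoe']
          rcases Nat.eq_or_lt_of_le (Nat.succ_le_of_lt hi) with h1 | h1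
          · exact hfmnefn (((by congr 1; omega : f m = f (i + 1))).trans heq)
          · have h2 := hint (i+1) (by omega) (by omega)
            rw [heq] at h2
            omega
        exact ⟨e', he', by rw [ho'def, Function.update_of_ne hene]; exact hoe'⟩
      obtain ⟨o'', ho'', hlt⟩ := IH m (by omega) o' ho' f (by rw [hCw]; exact hw)
        (by rw [hA]; omega) hstep'
      exact ⟨o'', ho'', by omega⟩

lemma improve (k l : ℤ) (hl0 : 0 ≤ l) (hlk : l ≤ k) (F : Finset (Sym2 V))
    (hSimple : ∀ e ∈ F, ¬ e.IsDiag) (hSp : Sparse k l F) (x : V)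
    (o : Sym2 V → V × V) (ho : ∀ e ∈ F, Sym2.mk (o e).1 (o e).2 = e) (u : V)
    (hu : (if u = x then k - l else k) < (inDeg F o u : ℤ)) :
    ∃ o', (∀ e ∈ F, Sym2.mk (o' e).1 (o' e).2 = e) ∧
      Mdef F (fun v => if v = x then k - l else k) o'
        < Mdef F (fun v => if v = x then k - l else k) o := by
  classical
  set t : V → ℤ := fun v => if v = x then k - l else k with ht
  set stp : V → V → Prop := fun a b => ∃ e ∈ F, o e = (a, b) with hstp
  set R : Finset V := Finset.univ.filter (fun v => Relation.ReflTransGen stp v u) with hR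
  have huR : u ∈ R := by
    simp only [hR, Finset.mem_filter, Finset.mem_univ, true_and]
    exact Relation.ReflTransGen.refl
  have hclosed : ∀ e ∈ F, (o e).2 ∈ R → (o e).1 ∈ R := by
    intro e he h2
    simp only [hR, Finset.mem_filter, Finset.mem_univ, true_and] at h2 ⊢
    exact Relation.ReflTransGen.head ⟨e, he, rfl⟩ h2
  have hfilter : F.filter (fun e => (o e).2 ∈ R) = edgesWithin F R := by
    ext e
    simp only [Finset.mem_filter, edgesWithin]
    constructor
    · rintro ⟨he, h2⟩
      refine ⟨he, fun v hv => ?_⟩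
      rw [← ho e he] at hv
      rcases Sym2.mem_iff.1 hv with h | h
      · rw [h]; exact hclosed e he h2
      · rw [h]; exact h2
    · rintro ⟨he, hall⟩
      refine ⟨he, hall (o e).2 ?_⟩
      have h1 : Sym2.mk (o e).1 (o e).2 = e := by exact ho e he
      have h2 : (o e).2 ∈ Sym2.mk (o e).1 (o e).2 := Sym2.mem_mk_right _ _
      rw [h1] at h2
      exact h2
  have hsumdeg : ∑ v ∈ R, (inDeg F o v : ℤ) = ((edgesWithin F R).card : ℤ) := by
    rw [← hfilter]
    exact_mod_cast congrArg (Nat.cast : ℕ → ℤ) (sum_inDeg_mem F o R)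
  have hk0 : (0:ℤ) ≤ k := le_trans hl0 hlk
  have hcardle : ((edgesWithin F R).card : ℤ) ≤ k * R.card - (if x ∈ R then l else 0) := by
    have h1 := hSp (edgesWithin F R) (Finset.filter_subset _ _)
    have hsupp : edgeSupp (edgesWithin F R) ⊆ R := by
      intro v hv
      simp only [edgeSupp, Finset.mem_filter, Finset.mem_univ, true_and] at hv
      obtain ⟨e, heW, hve⟩ := hv
      exact (Finset.mem_filter.1 heW).2 v hve
    have hsc : ((edgeSupp (edgesWithin F R)).card : ℤ) ≤ (R.card : ℤ) := by
      exact_mod_cast Finset.card_le_card hsupp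
    have hRpos : (1 : ℤ) ≤ (R.card : ℤ) := by
      exact_mod_cast Finset.card_pos.2 ⟨u, huR⟩
    have hmul : k * ((edgeSupp (edgesWithin F R)).card : ℤ) ≤ k * (R.card : ℤ) :=
      mul_le_mul_of_nonneg_left hsc hk0
    have hmul1 : k * 1 ≤ k * (R.card : ℤ) := mul_le_mul_of_nonneg_left hRpos hk0
    refine le_trans h1 (max_le ?_ ?_) <;> split_ifs <;> linarith
  have hsumt : ∑ v ∈ R, t v = k * R.card - (if x ∈ R then l else 0) := by
    have hpt : ∀ v ∈ R, t v = k - (if v = x then l else 0) := by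
      intro v _
      simp only [ht]
      split_ifs <;> ring
    rw [Finset.sum_congr rfl hpt, Finset.sum_sub_distrib, Finset.sum_const,
        Finset.sum_ite_eq' R x (fun _ => l), nsmul_eq_mul, mul_comm]
  have hsumle : ∑ v ∈ R, ((inDeg F o v : ℤ) - t v) ≤ 0 := by
    rw [Finset.sum_sub_distrib, hsumdeg, hsumt]
    linarith
  have hdef : ∃ w ∈ R, (inDeg F o w : ℤ) - t w < 0 := by
    by_contra hno
    push_neg at hno
    have h1 : ((inDeg F o u : ℤ) - t u) ≤ ∑ v ∈ R, ((inDeg F o v : ℤ) - t v) :=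
      Finset.single_le_sum hno huR
    have h2 : (0:ℤ) < (inDeg F o u : ℤ) - t u := by
      have : t u < (inDeg F o u : ℤ) := hu
      linarith
    linarith
  obtain ⟨w, hwR, hwdef⟩ := hdef
  have hreach : Relation.ReflTransGen stp w u := by
    simpa [hR] using hwR
  obtain ⟨n, f, h0, hn, hs⟩ := rtg_to_walk hreach
  refine walk_reverse F hSimple t n o ho f ?_ ?_ ?_
  · rw [h0]; linarith
  · rw [hn]; exact hu
  · intro i hi
    exact hs i hi

end Aux

/-- If `0 ≤ ℓ ≤ k` and `H = (V, F)` is `(k,ℓ)`-tight with `|V| ≥ 2`, then for any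
vertex `x` there is an orientation with `ρ(x) = k - ℓ` and `ρ(z) = k` for `z ≠ x`. -/
theorem orientation_of_tight_of_le {V : Type*} [Fintype V] [DecidableEq V]
    (k l : ℤ) (hl0 : 0 ≤ l) (hlk : l ≤ k)
    (F : Finset (Sym2 V)) (hSimple : ∀ e ∈ F, ¬ e.IsDiag) (hTight : Tight k l F)
    (hV : 2 ≤ Fintype.card V) (x : V) :
    ∃ o : Sym2 V → V × V, (∀ e ∈ F, Sym2.mk (o e).1 (o e).2 = e) ∧
      (inDeg F o x : ℤ) = k - l ∧ ∀ z : V, z ≠ x → (inDeg F o z : ℤ) = k := by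
  classical
  set t : V → ℤ := fun v => if v = x then k - l else k with ht
  have hkn : (F.card : ℤ) = k * Fintype.card V - l := by
    rw [hTight.2, max_eq_left]
    have h2 : (2:ℤ) ≤ (Fintype.card V : ℤ) := by exact_mod_cast hV
    nlinarith
  have hval0 : ∃ o : Sym2 V → V × V, ∀ e ∈ F, Sym2.mk (o e).1 (o e).2 = e := by
    have hsurj : ∀ e : Sym2 V, ∃ p : V × V, Sym2.mk p.1 p.2 = e :=
      fun e => e.ind (fun a b => ⟨(a, b), rfl⟩)
    exact ⟨fun e => Classical.choose (hsurj e), fun e _ => Classical.choose_spec (hsurj e)⟩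
  obtain ⟨o₀, ho₀⟩ := hval0
  set S : Finset (Sym2 V → V × V) :=
    Finset.univ.filter (fun o => ∀ e ∈ F, Sym2.mk (o e).1 (o e).2 = e) with hS
  have hne : S.Nonempty := ⟨o₀, by simp only [hS, Finset.mem_filter, Finset.mem_univ, true_and]; exact ho₀⟩
  obtain ⟨o, hoS, hmin⟩ := S.exists_min_image (Mdef F t) hne
  have ho : ∀ e ∈ F, Sym2.mk (o e).1 (o e).2 = e := by
    have := (Finset.mem_filter.1 hoS).2
    exact this
  have hM0 : Mdef F t o = 0 := by
    by_contra hM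
    have hM' : ∑ v, ((inDeg F o v : ℤ) - t v).toNat ≠ 0 := hM
    obtain ⟨u, _, hune⟩ := Finset.exists_ne_zero_of_sum_ne_zero hM'
    have hu : t u < (inDeg F o u : ℤ) := by omega
    obtain ⟨o', ho', hlt⟩ := improve k l hl0 hlk F hSimple hTight.1 x o ho u (by exact hu)
    rw [← ht] at hlt
    have := hmin o' (by simp only [hS, Finset.mem_filter, Finset.mem_univ, true_and]; exact ho')
    omega
  have hle : ∀ v : V, (inDeg F o v : ℤ) ≤ t v := by
    intro v
    have h1 : ((inDeg F o v : ℤ) - t v).toNat = 0 :=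
      (Finset.sum_eq_zero_iff.1 hM0) v (Finset.mem_univ v)
    omega
  have hsumdeg : ∑ v, (inDeg F o v : ℤ) = (F.card : ℤ) := by
    exact_mod_cast congrArg (Nat.cast : ℕ → ℤ) (sum_inDeg F o)
  have hsumt : ∑ v, t v = k * Fintype.card V - l := by
    have hpt : ∀ v ∈ (Finset.univ : Finset V), t v = k - (if v = x then l else 0) := by
      intro v _
      simp only [ht]
      split_ifs <;> ring
    rw [Finset.sum_congr rfl hpt, Finset.sum_sub_distrib, Finset.sum_const,
        Finset.sum_ite_eq' Finset.univ x (fun _ => l), nsmul_eq_mul, mul_comm, if_pos (Finset.mem_univ x)]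
    rfl
  have hzero : ∑ v, ((inDeg F o v : ℤ) - t v) = 0 := by
    rw [Finset.sum_sub_distrib, hsumdeg, hsumt, hkn]
    ring
  have heq : ∀ v : V, (inDeg F o v : ℤ) = t v := by
    intro v
    have := (Finset.sum_eq_zero_iff_of_nonpos
      (fun i _ => by have := hle i; linarith)).1 hzero v (Finset.mem_univ v)
    linarith
  refine ⟨o, ho, ?_, ?_⟩
  · have := heq x
    simpa [ht] using this
  · intro z hz
    have := heq z
    simpa [ht, hz] using this
end

section
/- Let k, ℓ be integers with 0 ≤ k ≤ ℓ ≤ 2k−1, let H=(V,F) be a (k,ℓ)-tight graph with |V| ≥ 2, and let x, y ∈ V be two distinct vertices of H. Then H has an orientation such that the in-degree of x is 0, the in-degree of y is 2k−ℓ, and the in-degree of every vertex z ∈ V∖{x,y} is k. -/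
/-!
Common set-up: a finite simple undirected graph on vertex type `V` is given by a
finset `F` of undirected edges (`Sym2 V`), all non-loops.  An orientation is a map
`o : Sym2 V → V × V` with `Sym2.mk (o e) = e` for every `e ∈ F`.
-/

variable {V : Type*}

/-- If `0 ≤ k ≤ ℓ ≤ 2k - 1` and `H = (V, F)` is `(k,ℓ)`-tight with `|V| ≥ 2`, then for
any distinct vertices `x, y` there is an orientation with `ρ(x) = 0`, `ρ(y) = 2k - ℓ`,
and `ρ(z) = k` for all other `z`. -/
theorem orientation_of_tight_of_ge {V : Type*} [Fintype V] [DecidableEq V]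
    (k l : ℤ) (hk0 : 0 ≤ k) (hkl : k ≤ l) (hl2k : l ≤ 2 * k - 1)
    (F : Finset (Sym2 V)) (hSimple : ∀ e ∈ F, ¬ e.IsDiag) (hTight : Tight k l F)
    (hV : 2 ≤ Fintype.card V) (x y : V) (hxy : x ≠ y) :
    ∃ o : Sym2 V → V × V, (∀ e ∈ F, Sym2.mk (o e).1 (o e).2 = e) ∧
      (inDeg F o x : ℤ) = 0 ∧ (inDeg F o y : ℤ) = 2 * k - l ∧
      ∀ z : V, z ≠ x → z ≠ y → (inDeg F o z : ℤ) = k := by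
  classical
  have hk1 : 1 ≤ k := by linarith
  have hnn : (0:ℤ) ≤ 2 * k - l := by linarith
  -- target in-degrees
  set m : V → ℕ := fun v => if v = x then 0 else if v = y then (2*k - l).toNat else k.toNat
    with hm
  -- pointwise formula for `m` in `ℤ`
  have hmval : ∀ v : V, (m v : ℤ) =
      k - (if v = x then k else 0) - (if v = y then l - k else 0) := by
    intro v
    by_cases hvx : v = x
    · subst hvx
      simp [hm, hxy]
    · by_cases hvy : v = y
      · subst hvy
        simp [hm, hvx, Int.toNat_of_nonneg hnn]; ring
      · simp [hm, hvx, hvy, Int.toNat_of_nonneg hk0]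
  -- sum formula for `m` over any finset
  have hmsum : ∀ s : Finset V, (∑ v ∈ s, (m v : ℤ)) =
      k * s.card - (if x ∈ s then k else 0) - (if y ∈ s then l - k else 0) := by
    intro s
    rw [Finset.sum_congr rfl (fun v _ => hmval v)]
    rw [Finset.sum_sub_distrib, Finset.sum_sub_distrib, Finset.sum_const,
      Finset.sum_ite_eq' s x (fun _ => k), Finset.sum_ite_eq' s y (fun _ => l - k)]
    push_cast; ring
  -- lower bound for the sum of `m` over the support of any subfamily of `F`
  have hkey : ∀ S' : Finset (Sym2 V), S' ⊆ F →
      (S'.card : ℤ) ≤ ∑ v ∈ edgeSupp S', (m v : ℤ) := by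
    intro S' hS'F
    have hsp := hTight.1 S' hS'F
    rw [hmsum]
    rcases le_or_gt (S'.card : ℤ) 0 with h0 | h0
    · have : (S'.card : ℤ) = 0 := le_antisymm h0 (by positivity)
      rw [this]
      have h1 : (if x ∈ edgeSupp S' then k else 0) ≤ k := by split <;> linarith
      have h2 : (if y ∈ edgeSupp S' then l - k else 0) ≤ l - k := by split <;> linarith
      have h3 : (0:ℤ) ≤ ∑ v ∈ edgeSupp S', (m v : ℤ) := by positivity
      rw [hmsum] at h3; linarith
    · have hle : (S'.card : ℤ) ≤ k * (edgeSupp S').card - l := by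
        rcases max_cases (k * (edgeSupp S').card - l) 0 with ⟨he, _⟩ | ⟨he, _⟩
        · rw [he] at hsp; exact hsp
        · rw [he] at hsp; linarith
      have h1 : (if x ∈ edgeSupp S' then (k:ℤ) else 0) ≤ k := by split <;> linarith
      have h2 : (if y ∈ edgeSupp S' then l - k else 0) ≤ l - k := by split <;> linarith
      linarith
  -- slot sets for Hall's theorem
  set slot : V → Finset (V × ℕ) := fun v => {v} ×ˢ Finset.range (m v) with hslot
  have hslotcard : ∀ v, (slot v).card = m v := by
    intro v; simp [hslot]
  have hslotdisj : ∀ v ∈ (Finset.univ : Finset V), ∀ w ∈ (Finset.univ : Finset V),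
      v ≠ w → Disjoint (slot v) (slot w) := by
    intro v _ w _ hvw
    rw [Finset.disjoint_left]
    intro p hp hq
    simp only [hslot] at hp hq
    rw [Finset.mem_product, Finset.mem_singleton] at hp hq
    exact hvw (hp.1.symm.trans hq.1)
  set t : {e // e ∈ F} → Finset (V × ℕ) :=
    fun e => (Finset.univ.filter (fun v => v ∈ e.1)).biUnion slot with ht
  -- Hall's condition
  have hHall : ∀ S : Finset {e // e ∈ F}, S.card ≤ (S.biUnion t).card := by
    intro S
    set S' : Finset (Sym2 V) := S.image Subtype.val with hS'
    have hS'F : S' ⊆ F := by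
      intro e he
      rw [hS', Finset.mem_image] at he
      obtain ⟨⟨e', he'⟩, _, rfl⟩ := he
      exact he'
    have hcard : S.card = S'.card := (Finset.card_image_of_injective S Subtype.val_injective).symm
    have hbi : S.biUnion t = (edgeSupp S').biUnion slot := by
      ext p
      simp only [Finset.mem_biUnion, ht, edgeSupp, Finset.mem_filter, Finset.mem_univ,
        true_and, hS', Finset.mem_image]
      aesop
    rw [hbi, Finset.card_biUnion (fun v _ w _ h => hslotdisj v (Finset.mem_univ v) w
      (Finset.mem_univ w) h)]
    have := hkey S' hS'F
    have h2 : (∑ v ∈ edgeSupp S', (m v : ℤ)) = ((∑ v ∈ edgeSupp S', m v : ℕ) : ℤ) := by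
      push_cast; rfl
    rw [hcard]
    have : (S'.card : ℤ) ≤ ((∑ v ∈ edgeSupp S', m v : ℕ) : ℤ) := h2 ▸ this
    have := Int.ofNat_le.mp this
    calc S'.card ≤ ∑ v ∈ edgeSupp S', m v := this
      _ = ∑ v ∈ edgeSupp S', (slot v).card := by
          exact Finset.sum_congr rfl (fun v _ => (hslotcard v).symm)
  obtain ⟨f, hfinj, hft⟩ := (Finset.all_card_le_biUnion_card_iff_exists_injective t).mp hHall
  have hfmem : ∀ e : {e // e ∈ F}, (f e).1 ∈ e.1 ∧ (f e).2 < m (f e).1 := by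
    intro e
    have h := hft e
    simp only [ht] at h
    rw [Finset.mem_biUnion] at h
    obtain ⟨v, hv, hp⟩ := h
    rw [Finset.mem_filter] at hv
    rw [hslot, Finset.mem_product, Finset.mem_singleton, Finset.mem_range] at hp
    obtain ⟨h1, h2⟩ := hp
    subst h1
    exact ⟨hv.2, h2⟩
  -- construct the orientation
  have hne : Nonempty V := Fintype.card_pos_iff.mp (by omega)
  obtain ⟨v0⟩ := hne
  set o : Sym2 V → V × V := fun e =>
    if he : e ∈ F then (Sym2.Mem.other' (hfmem ⟨e, he⟩).1, (f ⟨e, he⟩).1) else (v0, v0)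
    with ho
  have horient : ∀ e ∈ F, Sym2.mk (o e).1 (o e).2 = e := by
    intro e he
    simp only [ho, dif_pos he]
    rw [Sym2.eq_swap]
    exact Sym2.other_spec' (hfmem ⟨e, he⟩).1
  -- in-degree analysis
  have hodeg : ∀ e (he : e ∈ F), (o e).2 = (f ⟨e, he⟩).1 := by
    intro e he; simp [ho, dif_pos he]
  have hdegle : ∀ v : V, inDeg F o v ≤ m v := by
    intro v
    unfold inDeg
    rw [← Finset.card_range (m v)]
    apply Finset.card_le_card_of_injOn
      (fun e => if he : e ∈ F then (f ⟨e, he⟩).2 else 0)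
    · intro e he
      rw [Finset.mem_coe, Finset.mem_filter] at he
      obtain ⟨heF, hev⟩ := he
      rw [hodeg e heF] at hev
      beta_reduce
      rw [dif_pos heF, Finset.mem_coe, Finset.mem_range]
      have := (hfmem ⟨e, heF⟩).2
      rwa [hev] at this
    · intro e1 he1 e2 he2 heq
      rw [Finset.coe_filter, Set.mem_setOf_eq] at he1 he2
      obtain ⟨he1F, he1v⟩ := he1
      obtain ⟨he2F, he2v⟩ := he2
      simp only [dif_pos he1F, dif_pos he2F] at heq
      rw [hodeg e1 he1F] at he1v
      rw [hodeg e2 he2F] at he2v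
      have : f ⟨e1, he1F⟩ = f ⟨e2, he2F⟩ :=
        Prod.ext (he1v.trans he2v.symm) heq
      exact Subtype.ext_iff.mp (hfinj this)
  have hdegsum : ∑ v : V, inDeg F o v = F.card := by
    unfold inDeg
    exact (Finset.card_eq_sum_card_fiberwise (fun e _ => Finset.mem_univ ((o e).2))).symm
  have hFcard : (F.card : ℤ) = k * Fintype.card V - l := by
    have hpos : (0:ℤ) ≤ k * Fintype.card V - l := by
      have : (2:ℤ) ≤ Fintype.card V := by exact_mod_cast hV
      nlinarith
    rw [hTight.2, max_eq_left hpos]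
  have hmtotal : (∑ v : V, (m v : ℤ)) = k * Fintype.card V - l := by
    rw [hmsum Finset.univ, if_pos (Finset.mem_univ x), if_pos (Finset.mem_univ y),
      Finset.card_univ]
    ring
  have hsumeq : ∑ v : V, inDeg F o v = ∑ v : V, m v := by
    have : ((∑ v : V, inDeg F o v : ℕ) : ℤ) = ((∑ v : V, m v : ℕ) : ℤ) := by
      push_cast
      rw [hmtotal]
      rw_mod_cast [hdegsum]
      exact hFcard
    exact_mod_cast this
  have hdeg : ∀ v : V, inDeg F o v = m v := by
    intro v
    exact (Finset.sum_eq_sum_iff_of_le (fun i _ => hdegle i)).mp hsumeq v (Finset.mem_univ v)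
  refine ⟨o, horient, ?_, ?_, ?_⟩
  · rw [hdeg x]; simp [hm]
  · rw [hdeg y]
    have hyx : y ≠ x := Ne.symm hxy
    have : m y = (2*k - l).toNat := by simp [hm, hyx]
    rw [this, Int.toNat_of_nonneg hnn]
  · intro z hzx hzy
    rw [hdeg z]
    simp [hm, hzx, hzy, Int.toNat_of_nonneg hk0]
end

section
/- Let k, ℓ be integers with 0 ≤ ℓ ≤ k, let H=(V,F) be a (k,ℓ)-tight graph with |V| ≥ 2, and let x ∈ V. Set m(x) = k−ℓ and m(z) = k for all z ∈ V∖{x}. Then Σ_{v∈V} m(v) = |F|, and for every X ⊆ V, |F(X)| ≤ Σ_{v∈X} m(v), where F(X) denotes the set of edges of F joining two vertices of X. -/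
/-!
Common set-up: a finite simple undirected graph on vertex type `V` is given by a
finset `F` of undirected edges (`Sym2 V`), all non-loops.  An orientation is a map
`o : Sym2 V → V × V` with `Sym2.mk (o e) = e` for every `e ∈ F`.
-/

variable {V : Type*}

/-- Feasibility of Step 2 of Protocol A: for `0 ≤ ℓ ≤ k`, a `(k,ℓ)`-tight graph with
`|V| ≥ 2`, and `m(x) = k - ℓ`, `m(z) = k` for `z ≠ x`, Hakimi's condition holds:
`∑ v, m v = |F|` and `|F(X)| ≤ ∑ v ∈ X, m v` for every `X ⊆ V`. -/
theorem hakimi_condition_of_le {V : Type*} [Fintype V] [DecidableEq V]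
    (k l : ℤ) (hl0 : 0 ≤ l) (hlk : l ≤ k)
    (F : Finset (Sym2 V)) (hSimple : ∀ e ∈ F, ¬ e.IsDiag) (hTight : Tight k l F)
    (hV : 2 ≤ Fintype.card V) (x : V) :
    (∑ v : V, (if v = x then k - l else k)) = (F.card : ℤ) ∧
      ∀ X : Finset V,
        ((edgesWithin F X).card : ℤ) ≤ ∑ v ∈ X, (if v = x then k - l else k) := by

  have hk0 : (0:ℤ) ≤ k := le_trans hl0 hlk
  have hsum : ∀ X : Finset V, (∑ v ∈ X, (if v = x then k - l else k))
      = k * X.card - (if x ∈ X then l else 0) := by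
    intro X
    have : ∀ v : V, (if v = x then k - l else k) = k - (if v = x then l else 0) := by
      intro v; split <;> ring
    simp only [this, Finset.sum_sub_distrib, Finset.sum_ite_eq', Finset.sum_const,
      nsmul_eq_mul]
    ring
  have hsum_nonneg : ∀ X : Finset V, (0:ℤ) ≤ ∑ v ∈ X, (if v = x then k - l else k) := by
    intro X
    refine Finset.sum_nonneg fun v _ => ?_
    split <;> linarith
  constructor
  · rw [hsum Finset.univ]
    have hcard : (k * (Fintype.card V) - l) ≥ 0 := by
      have : (2:ℤ) ≤ (Fintype.card V : ℤ) := by exact_mod_cast hV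
      nlinarith
    rw [hTight.2, max_eq_left hcard]
    simp [Finset.card_univ]
  · intro X
    have hsub : edgesWithin F X ⊆ F := Finset.filter_subset _ _
    have hsp := hTight.1 _ hsub
    have hsupp : edgeSupp (edgesWithin F X) ⊆ X := by
      intro v hv
      simp only [edgeSupp, Finset.mem_filter] at hv
      obtain ⟨-, e, he, hve⟩ := hv
      simp only [edgesWithin, Finset.mem_filter] at he
      exact he.2 v hve
    have hcard : (edgeSupp (edgesWithin F X)).card ≤ X.card := Finset.card_le_card hsupp
    rcases le_or_gt (k * ((edgeSupp (edgesWithin F X)).card : ℤ) - l) 0 with h | h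
    · have : ((edgesWithin F X).card : ℤ) ≤ 0 := by
        rw [max_eq_right h] at hsp; exact hsp
      exact le_trans this (hsum_nonneg X)
    · rw [max_eq_left h.le] at hsp
      rw [hsum X]
      have hmul : k * ((edgeSupp (edgesWithin F X)).card : ℤ) ≤ k * (X.card : ℤ) := by
        apply mul_le_mul_of_nonneg_left _ hk0
        exact_mod_cast hcard
      split <;> linarith
end

section
/- Let k, ℓ be integers with 0 ≤ k ≤ ℓ ≤ 2k−1, let H=(V,F) be a (k,ℓ)-tight graph with |V| ≥ 2, and let x, y ∈ V be distinct. Set m(x) = 0, m(y) = 2k−ℓ, and m(z) = k for all z ∈ V∖{x,y}. Then Σ_{v∈V} m(v) = |F|, and for every X ⊆ V, |F(X)| ≤ Σ_{v∈X} m(v), where F(X) denotes the set of edges of F joining two vertices of X. -/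
/-!
Common set-up: a finite simple undirected graph on vertex type `V` is given by a
finset `F` of undirected edges (`Sym2 V`), all non-loops.  An orientation is a map
`o : Sym2 V → V × V` with `Sym2.mk (o e) = e` for every `e ∈ F`.
-/

variable {V : Type*}

/-- Feasibility of Step 2 of Protocol B: for `0 ≤ k ≤ ℓ ≤ 2k - 1`, a `(k,ℓ)`-tight
graph with `|V| ≥ 2`, and `m(x) = 0`, `m(y) = 2k - ℓ`, `m(z) = k` otherwise, Hakimi's
condition holds: `∑ v, m v = |F|` and `|F(X)| ≤ ∑ v ∈ X, m v` for every `X ⊆ V`. -/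
theorem hakimi_condition_of_ge {V : Type*} [Fintype V] [DecidableEq V]
    (k l : ℤ) (hk0 : 0 ≤ k) (hkl : k ≤ l) (hl2k : l ≤ 2 * k - 1)
    (F : Finset (Sym2 V)) (hSimple : ∀ e ∈ F, ¬ e.IsDiag) (hTight : Tight k l F)
    (hV : 2 ≤ Fintype.card V) (x y : V) (hxy : x ≠ y) :
    (∑ v : V, (if v = x then 0 else if v = y then 2 * k - l else k)) = (F.card : ℤ) ∧
      ∀ X : Finset V,
        ((edgesWithin F X).card : ℤ) ≤
          ∑ v ∈ X, (if v = x then 0 else if v = y then 2 * k - l else k) := by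

  obtain ⟨hSparse, hCard⟩ := hTight
  have hmdef : ∀ v : V, (if v = x then 0 else if v = y then 2 * k - l else k)
      = k + (if v = x then -k else 0) + (if v = y then k - l else 0) := by
    intro v
    by_cases h1 : v = x
    · subst h1; rw [if_pos rfl, if_pos rfl, if_neg hxy]; ring
    · by_cases h2 : v = y <;> simp [h1, h2, Ne.symm hxy] <;> ring
  have hsumform : ∀ S : Finset V,
      ∑ v ∈ S, (if v = x then 0 else if v = y then 2 * k - l else k)
      = k * S.card + (if x ∈ S then -k else 0) + (if y ∈ S then k - l else 0) := by
    intro S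
    simp_rw [hmdef, Finset.sum_add_distrib, Finset.sum_const,
      Finset.sum_ite_eq' S x, Finset.sum_ite_eq' S y, nsmul_eq_mul]
    ring
  have hmnn : ∀ v : V, 0 ≤ (if v = x then 0 else if v = y then 2 * k - l else k) := by
    intro v; split
    · exact le_refl 0
    · split <;> linarith
  have hsumS : ∀ S : Finset V,
      k * S.card - l ≤ ∑ v ∈ S, (if v = x then 0 else if v = y then 2 * k - l else k) := by
    intro S
    rw [hsumform]
    have h1 : -k ≤ (if x ∈ S then -k else 0) := by split <;> linarith
    have h2 : k - l ≤ (if y ∈ S then k - l else 0) := by split <;> linarith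
    linarith
  have hkn : l + 1 ≤ k * (Fintype.card V) := by
    have h2n : (2 : ℤ) ≤ (Fintype.card V : ℤ) := by exact_mod_cast hV
    nlinarith
  constructor
  · rw [hsumform Finset.univ, if_pos (Finset.mem_univ x), if_pos (Finset.mem_univ y),
      hCard, max_eq_left (by linarith)]
    simp only [Finset.card_univ]
    ring
  · intro X
    have hsub : edgesWithin F X ⊆ F := Finset.filter_subset _ _
    have hSupp : edgeSupp (edgesWithin F X) ⊆ X := by
      intro v hv
      simp only [edgeSupp, Finset.mem_filter, Finset.mem_univ, true_and] at hv
      obtain ⟨e, he, hve⟩ := hv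
      simp only [edgesWithin, Finset.mem_filter] at he
      exact he.2 v hve
    have hstep := hSparse _ hsub
    have hmono : ∑ v ∈ edgeSupp (edgesWithin F X),
          (if v = x then 0 else if v = y then 2 * k - l else k)
        ≤ ∑ v ∈ X, (if v = x then 0 else if v = y then 2 * k - l else k) :=
      Finset.sum_le_sum_of_subset_of_nonneg hSupp (fun i _ _ => hmnn i)
    have hnn : 0 ≤ ∑ v ∈ X, (if v = x then 0 else if v = y then 2 * k - l else k) :=
      Finset.sum_nonneg (fun i _ => hmnn i)
    have := hsumS (edgeSupp (edgesWithin F X))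
    refine hstep.trans (max_le ?_ hnn)
    linarith
end
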